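/- Suppose $X_1, \ldots, X_k$ are real random variables with mean zero, variance one, satisfying $\mathrm{Cov}(X_i, X_j) \ge \rho > 0$ for all $i \neq j$. Let $\overline{X} = \frac{1}{k}\sum_{i=1}^k X_i$. Then for any $t > 0$, $\mathbb{P}\{\#\{i : |X_i - \overline{X}| > t\} \ge k/2\} \le \frac{2(1-\rho)}{t^2}$. -/

import Mathlib

open MeasureTheory

private lemma l2_mul_integrable {Ω : Type*} [MeasurableSpace Ω] {P : Measure Ω}
    {f g : Ω → ℝ} (hf : MemLp f 2 P) (hg : MemLp g 2 P) :
    Integrable (fun ω => f ω * g ω) P := by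
  have h := hf.smul (r := 1) hg (hpqr := ⟨by norm_num [ENNReal.inv_two_add_inv_two]⟩)
  rw [memLp_one_iff_integrable] at h
  have h2 : Integrable (f * g) P := by simpa [smul_eq_mul, mul_comm] using h
  exact h2

theorem stmt_6 {Ω : Type*} [MeasurableSpace Ω] (P : Measure Ω) [IsProbabilityMeasure P]
    (k : ℕ) (hk : 1 ≤ k) (ρ : ℝ) (hρ0 : 0 < ρ) (hρ1 : ρ ≤ 1)
    (X : Fin k → Ω → ℝ) (hmeas : ∀ i, Measurable (X i))
    (hL2 : ∀ i, MemLp (X i) 2 P)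
    (hmean : ∀ i, ∫ ω, X i ω ∂P = 0)
    (hvar : ∀ i, ∫ ω, (X i ω) ^ 2 ∂P = 1)
    (hcov : ∀ i j, i ≠ j → ρ ≤ ∫ ω, X i ω * X j ω ∂P)
    (t : ℝ) (ht : 0 < t) :
    P {ω | (k : ℝ) / 2 ≤
        ((Finset.univ.filter
          (fun i : Fin k => t < |X i ω - (1 / (k : ℝ)) * ∑ l : Fin k, X l ω|)).card : ℝ)} ≤
      ENNReal.ofReal (2 * (1 - ρ) / t ^ 2) := by
  have hk0 : (0:ℝ) < (k:ℝ) := by exact_mod_cast hk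
  set Y : Fin k → Ω → ℝ := fun i ω => X i ω - (1 / (k : ℝ)) * ∑ l : Fin k, X l ω with hYdef
  set S : Ω → ℝ := fun ω => ∑ i : Fin k, (Y i ω) ^ 2 with hSdef
  have hsumL2 : MemLp (fun ω => ∑ l : Fin k, X l ω) 2 P :=
    memLp_finset_sum Finset.univ (fun i _ => hL2 i)
  have hYL2 : ∀ i, MemLp (Y i) 2 P := fun i => (hL2 i).sub (hsumL2.const_mul _)
  have hSint : Integrable S P :=
    integrable_finset_sum _ (fun i _ => (hYL2 i).integrable_sq)
  have hSnonneg : 0 ≤ᵐ[P] S :=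
    Filter.Eventually.of_forall fun ω => Finset.sum_nonneg fun i _ => sq_nonneg _
  have hXX : ∀ i j, Integrable (fun ω => X i ω * X j ω) P :=
    fun i j => l2_mul_integrable (hL2 i) (hL2 j)
  -- pointwise identity
  have hSeq : ∀ ω, S ω = (∑ i : Fin k, (X i ω)^2)
      - (1/(k:ℝ)) * ∑ j : Fin k, ∑ l : Fin k, X j ω * X l ω := by
    intro ω
    have hT : ∑ j : Fin k, ∑ l : Fin k, X j ω * X l ω = (∑ l : Fin k, X l ω)^2 := by
      rw [pow_two, Finset.sum_mul_sum]
    rw [hT]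
    have h1 : S ω = ∑ i : Fin k, ((X i ω)^2
        - (2 * ((1/(k:ℝ)) * ∑ l : Fin k, X l ω)) * X i ω
        + ((1/(k:ℝ)) * ∑ l : Fin k, X l ω)^2) := by
      apply Finset.sum_congr rfl
      intro i _
      ring
    rw [h1, Finset.sum_add_distrib, Finset.sum_sub_distrib, ← Finset.mul_sum,
      Finset.sum_const, Finset.card_univ, Fintype.card_fin, nsmul_eq_mul]
    field_simp
    ring
  -- integral of S
  have hint1 : Integrable (fun ω => ∑ i : Fin k, (X i ω)^2) P :=
    integrable_finset_sum _ fun i _ => (hL2 i).integrable_sq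
  have hint2 : Integrable (fun ω => ∑ j : Fin k, ∑ l : Fin k, X j ω * X l ω) P :=
    integrable_finset_sum _ fun j _ => integrable_finset_sum _ fun l _ => hXX j l
  have hIS : ∫ ω, S ω ∂P = (k:ℝ)
      - (1/(k:ℝ)) * ∑ j : Fin k, ∑ l : Fin k, ∫ ω, X j ω * X l ω ∂P := by
    have : ∫ ω, S ω ∂P = ∫ ω, ((∑ i : Fin k, (X i ω)^2)
        - (1/(k:ℝ)) * ∑ j : Fin k, ∑ l : Fin k, X j ω * X l ω) ∂P :=
      integral_congr_ae (Filter.Eventually.of_forall hSeq)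
    rw [this, integral_sub hint1 (hint2.const_mul _), integral_finset_sum _ (fun i _ => (hL2 i).integrable_sq),
      integral_const_mul, integral_finset_sum _ (fun j _ => integrable_finset_sum _ fun l _ => hXX j l)]
    have : ∑ i : Fin k, ∫ ω, (X i ω)^2 ∂P = (k:ℝ) := by
      simp [hvar]
    rw [this]
    have h5 : ∑ j : Fin k, ∫ ω, ∑ l : Fin k, X j ω * X l ω ∂P
        = ∑ j : Fin k, ∑ l : Fin k, ∫ ω, X j ω * X l ω ∂P :=
      Finset.sum_congr rfl fun j _ => integral_finset_sum _ (fun l _ => hXX j l)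
    rw [h5]
  -- lower bound on the covariance sum
  have hSumBound : (k:ℝ) * (1 + ((k:ℝ)-1) * ρ)
      ≤ ∑ j : Fin k, ∑ l : Fin k, ∫ ω, X j ω * X l ω ∂P := by
    have inner : ∀ j : Fin k, 1 + ((k:ℝ)-1) * ρ ≤ ∑ l : Fin k, ∫ ω, X j ω * X l ω ∂P := by
      intro j
      rw [← Finset.add_sum_erase Finset.univ _ (Finset.mem_univ j)]
      have h1 : ∫ ω, X j ω * X j ω ∂P = 1 := by
        simpa [pow_two] using hvar j
      have hcard : ((Finset.univ.erase j).card : ℝ) = (k:ℝ) - 1 := by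
        rw [Finset.card_erase_of_mem (Finset.mem_univ j), Finset.card_univ, Fintype.card_fin]
        push_cast [Nat.cast_sub hk]
        ring
      have h2 : ((k:ℝ)-1) * ρ ≤ ∑ l ∈ Finset.univ.erase j, ∫ ω, X j ω * X l ω ∂P := by
        have := Finset.card_nsmul_le_sum (Finset.univ.erase j)
          (fun l => ∫ ω, X j ω * X l ω ∂P) ρ
          (fun l hl => hcov j l (Ne.symm (Finset.ne_of_mem_erase hl)))
        rw [nsmul_eq_mul, hcard] at this
        exact this
      linarith [h1, h2]
    calc (k:ℝ) * (1 + ((k:ℝ)-1) * ρ)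
        = ∑ _j : Fin k, (1 + ((k:ℝ)-1) * ρ) := by
          rw [Finset.sum_const, Finset.card_univ, Fintype.card_fin, nsmul_eq_mul]
      _ ≤ _ := Finset.sum_le_sum (fun j _ => inner j)
  have hISle : ∫ ω, S ω ∂P ≤ (k:ℝ) * (1 - ρ) := by
    rw [hIS]
    have hinvpos : (0:ℝ) < 1/(k:ℝ) := by positivity
    have hone : (1/(k:ℝ)) * (k:ℝ) = 1 := one_div_mul_cancel (ne_of_gt hk0)
    have h3 : 1 + ((k:ℝ)-1) * ρ
        ≤ (1/(k:ℝ)) * ∑ j : Fin k, ∑ l : Fin k, ∫ ω, X j ω * X l ω ∂P := by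
      calc 1 + ((k:ℝ)-1) * ρ = (1/(k:ℝ)) * ((k:ℝ) * (1 + ((k:ℝ)-1) * ρ)) := by
            rw [show (1/(k:ℝ)) * ((k:ℝ) * (1 + ((k:ℝ)-1) * ρ))
                = ((1/(k:ℝ)) * (k:ℝ)) * (1 + ((k:ℝ)-1) * ρ) by ring, hone, one_mul]
        _ ≤ _ := mul_le_mul_of_nonneg_left hSumBound hinvpos.le
    nlinarith [h3, hρ1, hk0]
  -- Markov
  set a : ℝ := (k:ℝ)/2 * t^2 with hadef
  have ha0 : 0 < a := by positivity
  have hMarkov := mul_meas_ge_le_integral_of_nonneg hSnonneg hSint a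
  have hsub : {ω | (k : ℝ) / 2 ≤
        ((Finset.univ.filter
          (fun i : Fin k => t < |X i ω - (1 / (k : ℝ)) * ∑ l : Fin k, X l ω|)).card : ℝ)}
      ⊆ {ω | a ≤ S ω} := by
    intro ω hω
    simp only [Set.mem_setOf_eq] at hω ⊢
    set F := Finset.univ.filter
      (fun i : Fin k => t < |X i ω - (1 / (k : ℝ)) * ∑ l : Fin k, X l ω|) with hF
    have h1 : ∀ i ∈ F, t^2 ≤ (Y i ω)^2 := by
      intro i hi
      have h2 : t < |Y i ω| := (Finset.mem_filter.mp hi).2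
      calc t^2 ≤ |Y i ω|^2 := by
            apply pow_le_pow_left₀ ht.le h2.le
        _ = (Y i ω)^2 := sq_abs _
    calc a = (k:ℝ)/2 * t^2 := rfl
      _ ≤ (F.card : ℝ) * t^2 := mul_le_mul_of_nonneg_right hω (by positivity)
      _ = ∑ _i ∈ F, t^2 := by rw [Finset.sum_const, nsmul_eq_mul]
      _ ≤ ∑ i ∈ F, (Y i ω)^2 := Finset.sum_le_sum h1
      _ ≤ S ω := Finset.sum_le_sum_of_subset_of_nonneg (Finset.subset_univ F)
            (fun i _ _ => sq_nonneg _)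
  calc P {ω | (k : ℝ) / 2 ≤
        ((Finset.univ.filter
          (fun i : Fin k => t < |X i ω - (1 / (k : ℝ)) * ∑ l : Fin k, X l ω|)).card : ℝ)}
      ≤ P {ω | a ≤ S ω} := measure_mono hsub
    _ ≤ ENNReal.ofReal (2 * (1 - ρ) / t ^ 2) := by
        have htoReal : (P {ω | a ≤ S ω}).toReal ≤ (∫ ω, S ω ∂P) / a := by
          rw [le_div_iff₀ ha0]
          rw [mul_comm]
          simpa only [measureReal_def] using hMarkov
        have hfinal : (∫ ω, S ω ∂P) / a ≤ 2 * (1 - ρ) / t ^ 2 := by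
          rw [div_le_div_iff₀ ha0 (by positivity : (0:ℝ) < t^2)]
          nlinarith [mul_le_mul_of_nonneg_right hISle (sq_nonneg t), hk0, sq_nonneg t]
        have hfin : P {ω | a ≤ S ω} ≠ ⊤ := measure_ne_top P _
        rw [← ENNReal.ofReal_toReal hfin]
        exact ENNReal.ofReal_le_ofReal (htoReal.trans hfinal)
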